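/- arXiv:1112.3827 — 4 statements merged into one kernel-verified Lean document; each statement's English description precedes it below -/
import Mathlib

section
/- For the UCB(ρ) policy with parameter ρ>0, in the environment θ=(δ_a,δ_b) with 0≤b<a≤1, the number of pulls of the suboptimal arm satisfies T_2(t) ≤ t/2 for every t≥2. -/
open MeasureTheory ProbabilityTheory Filter Asymptotics

noncomputable section

namespace Bandit

/-- Empirical mean of the first `s` values of the sequence `x`. -/
def empMean (x : ℕ → ℝ) (s : ℕ) : ℝ := (∑ u ∈ Finset.range s, x u) / s

/-- An element of `Fin K` maximizing `g`. -/
def argmaxFin {K : ℕ} (hK : 0 < K) (g : Fin K → ℝ) : Fin K :=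
  (Finset.univ.exists_max_image g ⟨⟨0, hK⟩, Finset.mem_univ _⟩).choose

theorem argmaxFin_spec {K : ℕ} (hK : 0 < K) (g : Fin K → ℝ) (j : Fin K) :
    g j ≤ g (argmaxFin hK g) := by
  have h := (Finset.univ.exists_max_image g ⟨⟨0, hK⟩, Finset.mem_univ _⟩).choose_spec
  exact h.2 j (Finset.mem_univ j)

/-- The arm pulled at round `t` by a generalized UCB policy with exploration functions `f`,
given the reward table `x` (where `x k u` is the reward of the `(u+1)`-th pull of arm `k`)
and the vector `T` of numbers of pulls of each arm before round `t`.
During the first `K` rounds (`t ≤ K`), each arm is pulled once; afterwards an arm maximizing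
the UCB index `X̂_{k,T_k(t-1)} + √(f_k(t) / T_k(t-1))` is pulled. -/
def ucbArmAux {K : ℕ} (hK : 0 < K) (f : Fin K → ℕ → ℝ) (x : Fin K → ℕ → ℝ)
    (T : Fin K → ℕ) (t : ℕ) : Fin K :=
  if h : t ≤ K then ⟨t - 1, by omega⟩
  else argmaxFin hK fun j => empMean (x j) (T j) + Real.sqrt (f j t / (T j : ℝ))

/-- `ucbCount hK f x t k` is `T_k(t)`, the number of pulls of arm `k` during rounds `1,…,t`
by the generalized UCB policy with exploration functions `f` on the reward table `x`. -/
def ucbCount {K : ℕ} (hK : 0 < K) (f : Fin K → ℕ → ℝ) (x : Fin K → ℕ → ℝ) :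
    ℕ → Fin K → ℕ
  | 0, _ => 0
  | t + 1, k =>
    ucbCount hK f x t k + if ucbArmAux hK f x (ucbCount hK f x t) (t + 1) = k then 1 else 0

/-- The arm pulled at round `t ≥ 1` by the generalized UCB policy. -/
def ucbArm {K : ℕ} (hK : 0 < K) (f : Fin K → ℕ → ℝ) (x : Fin K → ℕ → ℝ) (t : ℕ) : Fin K :=
  ucbArmAux hK f x (ucbCount hK f x (t - 1)) t

/-- The exploration function of the UCB(ρ) policy: `f_k(t) = ρ log t` for every arm. -/
def rhoLog {K : ℕ} (ρ : ℝ) : Fin K → ℕ → ℝ := fun _ t => ρ * Real.log t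

/-- The reward table of the two-armed deterministic environment `θ = (δ_a, δ_b)`:
arm `0` always gives `a` and arm `1` always gives `b`. -/
def diracTable (a b : ℝ) : Fin 2 → ℕ → ℝ := fun k _ => if k = 0 then a else b

end Bandit
namespace Bandit

-- sum of counts
lemma sum_counts (hK : 0 < 2) (f : Fin 2 → ℕ → ℝ) (x : Fin 2 → ℕ → ℝ) :
    ∀ t, ucbCount hK f x t 0 + ucbCount hK f x t 1 = t := by
  intro t
  induction t with
  | zero => simp [ucbCount]
  | succ n ih =>
    have harm : ucbArmAux hK f x (ucbCount hK f x n) (n+1) = 0 ∨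
        ucbArmAux hK f x (ucbCount hK f x n) (n+1) = 1 := by omega
    rcases harm with h | h <;> simp [ucbCount, h] <;> omega

lemma counts_two (hK : 0 < 2) (f : Fin 2 → ℕ → ℝ) (x : Fin 2 → ℕ → ℝ) (k : Fin 2) :
    ucbCount hK f x 2 k = 1 := by
  have h1 : ∀ T, ucbArmAux hK f x T 1 = 0 := by
    intro T; rw [ucbArmAux, dif_pos (by omega)]; rfl
  have h2 : ∀ T, ucbArmAux hK f x T 2 = 1 := by
    intro T; rw [ucbArmAux, dif_pos (by omega)]; rfl
  have hk : k = 0 ∨ k = 1 := by omega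
  rcases hk with rfl | rfl <;> simp [ucbCount, h1, h2]

lemma counts_mono (hK : 0 < 2) (f : Fin 2 → ℕ → ℝ) (x : Fin 2 → ℕ → ℝ) (k : Fin 2)
    {s t : ℕ} (h : s ≤ t) : ucbCount hK f x s k ≤ ucbCount hK f x t k := by
  exact monotone_nat_of_le_succ
    (f := fun u => ucbCount hK f x u k)
    (fun n => by simp only [ucbCount]; exact Nat.le_add_right _ _) h

lemma empMean_const (c : ℝ) {s : ℕ} (hs : 0 < s) (x : ℕ → ℝ) (hx : ∀ u, x u = c) :
    empMean x s = c := by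
  simp only [empMean]
  rw [Finset.sum_congr rfl (fun u _ => hx u), Finset.sum_const, Finset.card_range,
    nsmul_eq_mul]
  field_simp

/-- For UCB(ρ) with ρ > 0 in the environment θ = (δ_a, δ_b) with
0 ≤ b < a ≤ 1, the number of pulls of the suboptimal arm satisfies T_2(t) ≤ t/2
for every t ≥ 2. -/
theorem ucbRho_dirac_pull_le_half
    (ρ : ℝ) (hρ : 0 < ρ) (a b : ℝ) (hb : 0 ≤ b) (hba : b < a) (ha : a ≤ 1)
    (t : ℕ) (ht : 2 ≤ t) :
    (ucbCount (Nat.succ_pos 1) (rhoLog ρ) (diracTable a b) t 1 : ℝ) ≤ (t : ℝ) / 2 := by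
  set hK := Nat.succ_pos 1
  set f := rhoLog (K := 2) ρ with hf
  set x := diracTable a b with hx
  have key : ∀ t, 2 ≤ t → 2 * ucbCount hK f x t 1 ≤ t := by
    intro t ht
    induction t, ht using Nat.le_induction with
    | base => rw [counts_two]
    | succ n hn ih =>
      by_cases harm : ucbArmAux hK f x (ucbCount hK f x n) (n+1) = 1
      · -- arm 1 pulled at round n+1 > 2: need T1 < T0 at time n
        set T0 := ucbCount hK f x n 0 with hT0
        set T1 := ucbCount hK f x n 1 with hT1
        have hT0pos : 0 < T0 := le_trans (by rw [counts_two]) (counts_mono hK f x 0 hn)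
        have hT1pos : 0 < T1 := le_trans (by rw [counts_two]) (counts_mono hK f x 1 hn)
        have hsum : T0 + T1 = n := sum_counts hK f x n
        -- extract inequality from argmax
        have hnle : ¬ (n + 1 ≤ 2) := by omega
        set g := fun j : Fin 2 => empMean (x j) (ucbCount hK f x n j) +
          Real.sqrt (f j (n+1) / (ucbCount hK f x n j : ℝ)) with hg
        have harg : argmaxFin hK g = 1 := by
          have := harm
          rwa [ucbArmAux, dif_neg hnle] at this
        have hle : g 0 ≤ g 1 := by
          have := argmaxFin_spec hK g 0
          rwa [harg] at this
        have hm0 : empMean (x 0) T0 = a :=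
          empMean_const a hT0pos _ (fun u => by simp [hx, diracTable])
        have hm1 : empMean (x 1) T1 = b :=
          empMean_const b hT1pos _ (fun u => by simp [hx, diracTable])
        have hc : 0 < f (0 : Fin 2) (n+1) := by
          rw [hf]
          simp only [rhoLog]
          apply mul_pos hρ
          apply Real.log_pos
          have : (3 : ℝ) ≤ (n + 1 : ℕ) := by exact_mod_cast (by omega : 3 ≤ n + 1)
          linarith
        have hfeq : f (1 : Fin 2) (n+1) = f (0 : Fin 2) (n+1) := rfl
        set c := f (0 : Fin 2) (n+1) with hcdef
        have hle' : a + Real.sqrt (c / T0) ≤ b + Real.sqrt (c / T1) := by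
          have := hle
          simp only [hg, hfeq] at this
          rwa [hm0, hm1] at this
        have hsqrt : Real.sqrt (c / T0) < Real.sqrt (c / T1) := by linarith
        have hdiv : c / (T0 : ℝ) < c / (T1 : ℝ) := by
          by_contra hcon
          push_neg at hcon
          exact absurd (Real.sqrt_le_sqrt hcon) (not_le.mpr hsqrt)
        have hT : T1 < T0 := by
          have h01 : (0:ℝ) < T0 := by exact_mod_cast hT0pos
          have h11 : (0:ℝ) < T1 := by exact_mod_cast hT1pos
          have := (div_lt_div_iff₀ h01 h11).mp hdiv
          have : (T1 : ℝ) < T0 := by nlinarith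
          exact_mod_cast this
        have : ucbCount hK f x (n+1) 1 = T1 + 1 := by
          simp [ucbCount, harm]
          exact hT1.symm
        omega
      · have : ucbCount hK f x (n+1) 1 = ucbCount hK f x n 1 := by
          simp [ucbCount, harm]
        omega
  have h := key t ht
  have : (2 : ℝ) * (ucbCount hK f x t 1 : ℝ) ≤ t := by exact_mod_cast h
  linarith


end Bandit
end
end

section
/- Let 0≤b<a≤1, Δ=a−b, ρ>0, and define h(t) = (ρ/Δ²)·log t · (1 + √(2ρ log t/((t−1)Δ²)))^{−2} and f(n) = ∫_2^n min(h'(s),1) ds − h(2). For the UCB(ρ) policy in the environment θ=(δ_a,δ_b), for every n≥2 one has T_2(n) ≥ f(n); consequently the expected regret satisfies E_θ[R_n] ≥ Δ·f(n). -/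
open MeasureTheory ProbabilityTheory Filter Asymptotics

noncomputable section

namespace Bandit



lemma fin2_cases (j : Fin 2) : j = 0 ∨ j = 1 := by
  rcases j with ⟨v, hv⟩
  interval_cases v
  · exact Or.inl rfl
  · exact Or.inr rfl

lemma ucbCount_sum (hK : 0 < 2) (F : Fin 2 → ℕ → ℝ) (x : Fin 2 → ℕ → ℝ) (t : ℕ) :
    ucbCount hK F x t 0 + ucbCount hK F x t 1 = t := by
  induction t with
  | zero => simp [ucbCount]
  | succ t ih =>
    rcases fin2_cases (ucbArmAux hK F x (ucbCount hK F x t) (t + 1)) with hA | hA <;>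
      simp [ucbCount, hA] <;> omega

lemma ucbCount_two (hK : 0 < 2) (F : Fin 2 → ℕ → ℝ) (x : Fin 2 → ℕ → ℝ) (k : Fin 2) :
    ucbCount hK F x 2 k = 1 := by
  rcases fin2_cases k with hk | hk <;> subst hk <;>
    simp [ucbCount, ucbArmAux]

lemma one_le_ucbCount (hK : 0 < 2) (F : Fin 2 → ℕ → ℝ) (x : Fin 2 → ℕ → ℝ) (k : Fin 2)
    (t : ℕ) (ht : 2 ≤ t) : 1 ≤ ucbCount hK F x t k := by
  induction t with
  | zero => omega
  | succ t ih =>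
    rcases Nat.lt_or_ge t 2 with h2 | h2
    · have h1 : t = 1 := by omega
      subst h1
      simpa using (ucbCount_two hK F x k).ge
    · have := ih (by omega)
      simp only [ucbCount]
      omega

lemma empMean_const_s2 (c : ℝ) {s : ℕ} (hs : 1 ≤ s) : empMean (fun _ => c) s = c := by
  have hs' : (s : ℝ) ≠ 0 := by positivity
  simp [empMean, Finset.sum_const, mul_comm, mul_div_assoc, div_self hs']




lemma key_ineq (ρ : ℝ) (hρ : 0 < ρ) {a b Δ : ℝ} (hba : b < a) (hΔ : Δ = a - b)
    (h : ℝ → ℝ)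
    (hh : ∀ t : ℝ, h t = ρ / Δ ^ 2 * Real.log t /
        (1 + Real.sqrt (2 * ρ * Real.log t / ((t - 1) * Δ ^ 2))) ^ 2)
    (t T1 T2 : ℕ) (ht : 2 ≤ t) (hT1 : 1 ≤ T1) (hT2 : 1 ≤ T2) (hsum : T1 + T2 = t)
    (hle : b + Real.sqrt (ρ * Real.log ((t : ℝ) + 1) / T2) ≤
      a + Real.sqrt (ρ * Real.log ((t : ℝ) + 1) / T1)) :
    h ((t : ℝ) + 1) ≤ T2 := by
  have hΔ0 : 0 < Δ := by rw [hΔ]; linarith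
  have ht0 : (0 : ℝ) < t := by positivity
  have ht2 : (2 : ℝ) ≤ t := by exact_mod_cast ht
  have hT1' : (0 : ℝ) < T1 := by exact_mod_cast hT1
  have hT2' : (0 : ℝ) < T2 := by exact_mod_cast hT2
  have hsum' : (T1 : ℝ) + T2 = t := by exact_mod_cast hsum
  rw [hh]
  have hsimp : ((t : ℝ) + 1) - 1 = t := by ring
  rw [hsimp]
  set L := Real.log ((t : ℝ) + 1) with hLdef
  have hL : 0 < L := Real.log_pos (by linarith)
  set g := Real.sqrt (2 * ρ * L / ((t : ℝ) * Δ ^ 2)) with hgdef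
  have hg0 : 0 ≤ g := Real.sqrt_nonneg _
  have hginner : 0 < 2 * ρ * L / ((t : ℝ) * Δ ^ 2) := by positivity
  have hg2 : g ^ 2 = 2 * ρ * L / ((t : ℝ) * Δ ^ 2) := Real.sq_sqrt hginner.le
  clear_value L g
  by_cases hcase : (t : ℝ) ≤ 2 * T1
  · have s1 : Real.sqrt (ρ * L / T1) ≤ Real.sqrt (2 * ρ * L / t) := by
      apply Real.sqrt_le_sqrt
      rw [div_le_div_iff₀ hT1' ht0]
      nlinarith [mul_le_mul_of_nonneg_left hcase (mul_nonneg hρ.le hL.le)]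
    have s2 : Real.sqrt (2 * ρ * L / t) = Δ * g := by
      rw [← Real.sqrt_sq hΔ0.le, ← Real.sqrt_sq hg0, ← Real.sqrt_mul (sq_nonneg Δ), hg2]
      congr 1
      field_simp
    have s3 : Real.sqrt (ρ * L / T2) ≤ Δ * (1 + g) := by
      have : Δ * (1 + g) = (a - b) + Δ * g := by rw [hΔ]; ring
      rw [this]
      linarith [hle, s1, s2]
    have s4 : ρ * L / T2 ≤ (Δ * (1 + g)) ^ 2 := by
      have h1 : Real.sqrt (ρ * L / T2) ^ 2 = ρ * L / T2 := Real.sq_sqrt (by positivity)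
      nlinarith [Real.sqrt_nonneg (ρ * L / T2), s3]
    rw [div_le_iff₀ (by positivity : (0 : ℝ) < (1 + g) ^ 2)]
    rw [div_le_iff₀ hT2'] at s4
    rw [div_mul_eq_mul_div, div_le_iff₀ (by positivity : (0 : ℝ) < Δ ^ 2)]
    nlinarith [s4]
  · push_neg at hcase
    have hT2big : (t : ℝ) < 2 * T2 := by linarith
    have hb1 : ρ / Δ ^ 2 * L / (1 + g) ^ 2 ≤ ρ / Δ ^ 2 * L / g ^ 2 := by
      have hgsq : 0 < g ^ 2 := hg2 ▸ hginner
      have hle' : g ^ 2 ≤ (1 + g) ^ 2 := by nlinarith [hg0]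
      exact div_le_div_of_nonneg_left (by positivity) hgsq hle'
    have hb2 : ρ / Δ ^ 2 * L / g ^ 2 = (t : ℝ) / 2 := by
      have hΔ2 : Δ ^ 2 ≠ 0 := by positivity
      rw [hg2, div_div_eq_mul_div, div_eq_div_iff (by positivity) (by norm_num : (2:ℝ) ≠ 0),
        show ρ / Δ ^ 2 * L * ((t : ℝ) * Δ ^ 2) * 2 = ρ * L * (t : ℝ) * 2 * (Δ ^ 2 / Δ ^ 2) by ring,
        div_self hΔ2]
      ring
    linarith




lemma h_contDiffAt (ρ Δ : ℝ) (hρ : 0 < ρ) (hΔ0 : 0 < Δ) (h : ℝ → ℝ)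
    (hh : ∀ t : ℝ, h t = ρ / Δ ^ 2 * Real.log t /
        (1 + Real.sqrt (2 * ρ * Real.log t / ((t - 1) * Δ ^ 2))) ^ 2)
    {y : ℝ} (hy : 1 < y) : ContDiffAt ℝ 1 h y := by
  have hynz : y ≠ 0 := by linarith
  have hy1 : (0:ℝ) < y - 1 := by linarith
  have hlog : ContDiffAt ℝ 1 Real.log y := Real.contDiffAt_log.mpr hynz
  have hlogpos : 0 < Real.log y := Real.log_pos hy
  have hnum : ContDiffAt ℝ 1 (fun s : ℝ => ρ / Δ ^ 2 * Real.log s) y :=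
    contDiffAt_const.mul hlog
  have hden1 : ContDiffAt ℝ 1 (fun s : ℝ => (s - 1) * Δ ^ 2) y :=
    (contDiffAt_id.sub contDiffAt_const).mul contDiffAt_const
  have hinner : ContDiffAt ℝ 1 (fun s : ℝ => 2 * ρ * Real.log s / ((s - 1) * Δ ^ 2)) y :=
    (contDiffAt_const.mul hlog).div hden1 (by positivity)
  have hsqrt : ContDiffAt ℝ 1
      (fun s : ℝ => Real.sqrt (2 * ρ * Real.log s / ((s - 1) * Δ ^ 2))) y :=
    hinner.sqrt (ne_of_gt (by positivity))
  have hden : ContDiffAt ℝ 1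
      (fun s : ℝ => (1 + Real.sqrt (2 * ρ * Real.log s / ((s - 1) * Δ ^ 2))) ^ 2) y :=
    (contDiffAt_const.add hsqrt).pow 2
  have hexp : ContDiffAt ℝ 1 (fun s : ℝ => ρ / Δ ^ 2 * Real.log s /
      (1 + Real.sqrt (2 * ρ * Real.log s / ((s - 1) * Δ ^ 2))) ^ 2) y := by
    apply hnum.div hden
    have : 0 ≤ Real.sqrt (2 * ρ * Real.log y / ((y - 1) * Δ ^ 2)) := Real.sqrt_nonneg _
    positivity
  exact hexp.congr_of_eventuallyEq (Filter.Eventually.of_forall fun t => hh t)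


set_option maxHeartbeats 1000000 in
/-- Let 0 ≤ b < a ≤ 1, Δ = a - b, ρ > 0, and define
`h t = (ρ/Δ²)·log t·(1 + √(2ρ log t/((t-1)Δ²)))⁻²` and
`f n = ∫_2^n min(h'(s), 1) ds − h 2`. For UCB(ρ) in the environment θ = (δ_a, δ_b),
for every n ≥ 2 one has T_2(n) ≥ f(n); consequently the expected regret
E_θ[R_n] = Δ·T_2(n) satisfies E_θ[R_n] ≥ Δ·f(n). -/
theorem ucbRho_dirac_pull_and_regret_lower_bound
    (ρ : ℝ) (hρ : 0 < ρ) (a b : ℝ) (hb : 0 ≤ b) (hba : b < a) (ha : a ≤ 1)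
    (Δ : ℝ) (hΔ : Δ = a - b)
    (h : ℝ → ℝ)
    (hh : ∀ t : ℝ, h t =
      ρ / Δ ^ 2 * Real.log t /
        (1 + Real.sqrt (2 * ρ * Real.log t / ((t - 1) * Δ ^ 2))) ^ 2)
    (f : ℕ → ℝ)
    (hf : ∀ n : ℕ, f n = (∫ s in (2 : ℝ)..(n : ℝ), min (deriv h s) 1) - h 2)
    (n : ℕ) (hn : 2 ≤ n) :
    f n ≤ (ucbCount (Nat.succ_pos 1) (rhoLog ρ) (diracTable a b) n 1 : ℝ) ∧
    Δ * f n ≤ Δ * (ucbCount (Nat.succ_pos 1) (rhoLog ρ) (diracTable a b) n 1 : ℝ) := by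
  have hΔ0 : 0 < Δ := by rw [hΔ]; linarith
  have hcdOn : ContDiffOn ℝ 1 h (Set.Ioi 1) := fun y hy =>
    (h_contDiffAt ρ Δ hρ hΔ0 h hh (Set.mem_Ioi.mp hy)).contDiffWithinAt
  have hderivCont : ContinuousOn (deriv h) (Set.Ioi 1) :=
    hcdOn.continuousOn_deriv_of_isOpen isOpen_Ioi le_rfl
  have hdiffAt : ∀ y : ℝ, 1 < y → DifferentiableAt ℝ h y := fun y hy =>
    (h_contDiffAt ρ Δ hρ hΔ0 h hh hy).differentiableAt one_ne_zero
  have hsub : ∀ p q : ℝ, 2 ≤ p → 2 ≤ q → Set.uIcc p q ⊆ Set.Ioi 1 := by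
    intro p q hp hq s hs
    rw [Set.mem_uIcc] at hs
    rcases hs with ⟨h1, _⟩ | ⟨h1, _⟩ <;> simp only [Set.mem_Ioi] <;> linarith
  have hIntD : ∀ p q : ℝ, 2 ≤ p → 2 ≤ q →
      IntervalIntegrable (deriv h) MeasureTheory.volume p q := fun p q hp hq =>
    (hderivCont.mono (hsub p q hp hq)).intervalIntegrable
  have hIntM : ∀ p q : ℝ, 2 ≤ p → 2 ≤ q →
      IntervalIntegrable (fun s => min (deriv h s) 1) MeasureTheory.volume p q :=
    fun p q hp hq =>
      (((continuous_id.min continuous_const).comp_continuousOn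
        (hderivCont.mono (hsub p q hp hq)))).intervalIntegrable
  have hFTC : ∀ q : ℝ, 2 ≤ q → ∫ s in (2:ℝ)..q, deriv h s = h q - h 2 := by
    intro q hq
    refine intervalIntegral.integral_deriv_eq_sub (fun y hy => hdiffAt y ?_)
      (hIntD 2 q le_rfl hq)
    have := hsub 2 q le_rfl hq hy
    simpa using this
  have hmono : ∀ q : ℝ, 2 ≤ q → (∫ s in (2:ℝ)..q, min (deriv h s) 1) ≤ h q - h 2 := by
    intro q hq
    rw [← hFTC q hq]
    exact intervalIntegral.integral_mono_on hq (hIntM 2 q le_rfl hq) (hIntD 2 q le_rfl hq)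
      (fun s _ => min_le_left _ _)
  have hstep : ∀ q : ℝ, 2 ≤ q → (∫ s in q..(q+1), min (deriv h s) 1) ≤ 1 := by
    intro q hq
    calc (∫ s in q..(q+1), min (deriv h s) 1) ≤ ∫ _ in q..(q+1), (1:ℝ) :=
          intervalIntegral.integral_mono_on (by linarith) (hIntM q (q+1) hq (by linarith))
            intervalIntegrable_const (fun s _ => min_le_right _ _)
      _ = 1 := by simp
  have h2nonneg : 0 ≤ h 2 := by
    rw [hh]
    exact div_nonneg (mul_nonneg (by positivity) (Real.log_nonneg one_le_two)) (sq_nonneg _)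
  have hmain : ∀ m : ℕ, 2 ≤ m →
      f m ≤ (ucbCount (Nat.succ_pos 1) (rhoLog ρ) (diracTable a b) m 1 : ℝ) := by
    intro m hm
    induction m, hm using Nat.le_induction with
    | base =>
      rw [hf, ucbCount_two]
      rw [show ((2:ℕ):ℝ) = (2:ℝ) by norm_num, intervalIntegral.integral_same]
      simp only [Nat.cast_one]
      linarith
    | succ m hm ih =>
      have hm2 : (2:ℝ) ≤ (m:ℝ) := by exact_mod_cast hm
      rcases fin2_cases (ucbArmAux (Nat.succ_pos 1) (rhoLog ρ) (diracTable a b)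
          (ucbCount (Nat.succ_pos 1) (rhoLog ρ) (diracTable a b) m) (m+1)) with hA | hA
      · have hcount : ucbCount (Nat.succ_pos 1) (rhoLog ρ) (diracTable a b) (m+1) 1
            = ucbCount (Nat.succ_pos 1) (rhoLog ρ) (diracTable a b) m 1 := by
          simp [ucbCount, hA]
        have hT1 : 1 ≤ ucbCount (Nat.succ_pos 1) (rhoLog ρ) (diracTable a b) m 0 :=
          one_le_ucbCount _ _ _ _ m hm
        have hT2 : 1 ≤ ucbCount (Nat.succ_pos 1) (rhoLog ρ) (diracTable a b) m 1 :=
          one_le_ucbCount _ _ _ _ m hm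
        have hspec := argmaxFin_spec (Nat.succ_pos 1)
          (fun j => empMean (diracTable a b j)
              (ucbCount (Nat.succ_pos 1) (rhoLog ρ) (diracTable a b) m j)
            + Real.sqrt (rhoLog ρ j (m+1)
              / (ucbCount (Nat.succ_pos 1) (rhoLog ρ) (diracTable a b) m j : ℝ))) 1
        rw [ucbArmAux, dif_neg (by omega : ¬ (m+1 ≤ 2))] at hA
        rw [hA] at hspec
        have he0 : empMean (diracTable a b 0)
            (ucbCount (Nat.succ_pos 1) (rhoLog ρ) (diracTable a b) m 0) = a := by
          have hc : diracTable a b 0 = fun _ => a := by funext u; simp [diracTable]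
          rw [hc, empMean_const_s2 a hT1]
        have he1 : empMean (diracTable a b 1)
            (ucbCount (Nat.succ_pos 1) (rhoLog ρ) (diracTable a b) m 1) = b := by
          have hc : diracTable a b 1 = fun _ => b := by funext u; simp [diracTable]
          rw [hc, empMean_const_s2 b hT2]
        simp only [he0, he1, rhoLog] at hspec
        rw [show ((m+1:ℕ):ℝ) = (m:ℝ)+1 by push_cast; ring] at hspec
        have hkey := key_ineq ρ hρ hba hΔ h hh m _ _ hm hT1 hT2
          (ucbCount_sum (Nat.succ_pos 1) (rhoLog ρ) (diracTable a b) m) hspec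
        rw [hf, hcount, show ((m+1:ℕ):ℝ) = (m:ℝ)+1 by push_cast; ring]
        linarith [hmono ((m:ℝ)+1) (by linarith), hkey, h2nonneg]
      · have hcount : ucbCount (Nat.succ_pos 1) (rhoLog ρ) (diracTable a b) (m+1) 1
            = ucbCount (Nat.succ_pos 1) (rhoLog ρ) (diracTable a b) m 1 + 1 := by
          simp [ucbCount, hA]
        have hsplit : f (m+1) = f m + ∫ s in (m:ℝ)..((m:ℝ)+1), min (deriv h s) 1 := by
          rw [hf, hf, show ((m+1:ℕ):ℝ) = (m:ℝ)+1 by push_cast; ring,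
            ← intervalIntegral.integral_add_adjacent_intervals
              (hIntM 2 m (by norm_num) hm2) (hIntM m ((m:ℝ)+1) hm2 (by linarith))]
          ring
        rw [hsplit, hcount]
        push_cast
        linarith [ih, hstep (m:ℝ) hm2]
  refine ⟨hmain n hn, ?_⟩
  exact mul_le_mul_of_nonneg_left (hmain n hn) (by rw [hΔ]; linarith)

end Bandit
end
end

section
/- Let ρ>0 and K<t≤n. If the UCB(ρ) policy selects a suboptimal arm k (i.e. Δ_k>0) at round t, then at least one of the following three events holds: (i) X̂_{k*,T_{k*}(t−1)} + √(ρ log t/T_{k*}(t−1)) ≤ μ*; (ii) X̂_{k,T_k(t−1)} ≥ μ_k + √(ρ log t/T_k(t−1)); (iii) T_k(t−1) < 4ρ·log n/Δ_k². -/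
open MeasureTheory ProbabilityTheory Filter Asymptotics

noncomputable section

namespace Bandit

/-- `ν` is a valid bandit environment: each arm's reward distribution is a probability
measure on `[0,1]`. -/
def IsEnv {K : ℕ} (ν : Fin K → Measure ℝ) : Prop :=
  ∀ k, IsProbabilityMeasure (ν k) ∧ ν k (Set.Icc 0 1) = 1

/-- The mean of a reward distribution. -/
def mean (ν : Measure ℝ) : ℝ := ∫ x, x ∂ν

/-- `μ* = max_k μ_k`, the best mean reward of the environment `ν`. -/
def bestMean {K : ℕ} (hK : 0 < K) (ν : Fin K → Measure ℝ) : ℝ :=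
  Finset.univ.sup' ⟨⟨0, hK⟩, Finset.mem_univ _⟩ fun k => mean (ν k)

/-- `Δ_k = μ* - μ_k`, the optimality gap of arm `k` in the environment `ν`. -/
def gap {K : ℕ} (hK : 0 < K) (ν : Fin K → Measure ℝ) (k : Fin K) : ℝ :=
  bestMean hK ν - mean (ν k)

/-- `X` is a reward table process on `(Ω, P)` for the environment `ν`: the random variables
`X k u` (the reward of the `(u+1)`-th pull of arm `k`) are mutually independent, take values
in `[0,1]`, and `X k u` has distribution `ν k` for every `u`. -/
def IsRewardTable {K : ℕ} {Ω : Type*} [MeasurableSpace Ω] (P : Measure Ω)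
    (ν : Fin K → Measure ℝ) (X : Fin K → ℕ → Ω → ℝ) : Prop :=
  (∀ k u, Measurable (X k u)) ∧
  (∀ k u ω, X k u ω ∈ Set.Icc (0 : ℝ) 1) ∧
  (∀ k u, Measure.map (X k u) P = ν k) ∧
  iIndepFun (fun p : Fin K × ℕ => X p.1 p.2) P

/-- `E_θ[T_k(n)]`, the expected number of pulls of arm `k` up to round `n`, for the
generalized UCB policy with exploration functions `f`. -/
def ucbExpCount {K : ℕ} (hK : 0 < K) (f : Fin K → ℕ → ℝ) {Ω : Type*} [MeasurableSpace Ω]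
    (P : Measure Ω) (X : Fin K → ℕ → Ω → ℝ) (n : ℕ) (k : Fin K) : ℝ :=
  ∫ ω, (ucbCount hK f (fun j u => X j u ω) n k : ℝ) ∂P

/-- `E_θ[R_n] = ∑_k Δ_k E_θ[T_k(n)]`, the expected regret at horizon `n` of the
generalized UCB policy with exploration functions `f` in the environment `ν`. -/
def ucbRegret {K : ℕ} (hK : 0 < K) (f : Fin K → ℕ → ℝ) {Ω : Type*} [MeasurableSpace Ω]
    (P : Measure Ω) (ν : Fin K → Measure ℝ) (X : Fin K → ℕ → Ω → ℝ) (n : ℕ) : ℝ :=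
  ∑ k, gap hK ν k * ucbExpCount hK f P X n k

end Bandit
namespace Bandit

/-- The family `Θ_k` of sets of admissible reward distributions per arm, as in the paper:
each `Θ_k` consists of probability measures on `[0,1]` and contains every two-point
distribution `p δ_a + (1-p) δ_b` with `p, a, b ∈ [0,1]`. -/
def Admissible {K : ℕ} (Θk : Fin K → Set (Measure ℝ)) : Prop :=
  (∀ k, ∀ ν ∈ Θk k, IsProbabilityMeasure ν ∧ ν (Set.Icc 0 1) = 1) ∧
  (∀ k, ∀ p a b : ℝ, p ∈ Set.Icc (0 : ℝ) 1 → a ∈ Set.Icc (0 : ℝ) 1 → b ∈ Set.Icc (0 : ℝ) 1 →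
    ENNReal.ofReal p • Measure.dirac a + ENNReal.ofReal (1 - p) • Measure.dirac b ∈ Θk k)

/-- `Θ = Θ_1 × … × Θ_K`, the set of admissible environments. -/
def envSet {K : ℕ} (Θk : Fin K → Set (Measure ℝ)) : Set (Fin K → Measure ℝ) :=
  {θ | ∀ k, θ k ∈ Θk k}

end Bandit
namespace Bandit

/-- Let ρ > 0 and K < t ≤ n. If the UCB(ρ) policy selects a suboptimal
arm k (Δ_k > 0) at round t, then (i) X̂_{k*,T_{k*}(t-1)} + √(ρ log t/T_{k*}(t-1)) ≤ μ*, or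
(ii) X̂_{k,T_k(t-1)} ≥ μ_k + √(ρ log t/T_k(t-1)), or (iii) T_k(t-1) < 4ρ log n/Δ_k². -/
theorem ucbRho_suboptimal_selection_trichotomy
    (K : ℕ) (hK : 0 < K) (hK2 : 2 ≤ K)
    (ρ : ℝ) (hρ : 0 < ρ)
    (ν : Fin K → Measure ℝ) (hν : IsEnv ν)
    (x : Fin K → ℕ → ℝ)
    (kstar k : Fin K) (hkstar : mean (ν kstar) = bestMean hK ν)
    (hk : 0 < gap hK ν k)
    (t n : ℕ) (hKt : K < t) (htn : t ≤ n)
    (hsel : ucbArm hK (rhoLog ρ) x t = k) :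
    empMean (x kstar) (ucbCount hK (rhoLog ρ) x (t - 1) kstar) +
        Real.sqrt (ρ * Real.log t / (ucbCount hK (rhoLog ρ) x (t - 1) kstar : ℝ)) ≤
      bestMean hK ν ∨
    mean (ν k) +
        Real.sqrt (ρ * Real.log t / (ucbCount hK (rhoLog ρ) x (t - 1) k : ℝ)) ≤
      empMean (x k) (ucbCount hK (rhoLog ρ) x (t - 1) k) ∨
    (ucbCount hK (rhoLog ρ) x (t - 1) k : ℝ) < 4 * ρ * Real.log n / gap hK ν k ^ 2 := by
  by_contra hcon
  push_neg at hcon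
  obtain ⟨h1, h2, h3⟩ := hcon
  set T := ucbCount hK (rhoLog ρ) x (t - 1) with hT
  have harg : argmaxFin hK
      (fun j => empMean (x j) (T j) + Real.sqrt (rhoLog ρ j t / (T j : ℝ))) = k := by
    rw [ucbArm, ucbArmAux, dif_neg (by omega : ¬ t ≤ K)] at hsel
    exact hsel
  have hle := argmaxFin_spec hK
    (fun j => empMean (x j) (T j) + Real.sqrt (rhoLog ρ j t / (T j : ℝ))) kstar
  rw [harg] at hle
  simp only [rhoLog] at hle
  have hbest : bestMean hK ν < empMean (x k) (T k) + Real.sqrt (ρ * Real.log t / (T k : ℝ)) :=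
    lt_of_lt_of_le h1 hle
  have hgap : gap hK ν k < 2 * Real.sqrt (ρ * Real.log t / (T k : ℝ)) := by
    rw [gap]; linarith
  have hlogt : 0 ≤ Real.log t := Real.log_nonneg (by exact_mod_cast by omega)
  have hlogtn : Real.log t ≤ Real.log n :=
    Real.log_le_log (by exact_mod_cast by omega) (by exact_mod_cast htn)
  by_cases hTk : T k = 0
  · rw [hTk] at hgap
    simp at hgap
    linarith
  · have hTkpos : (0 : ℝ) < (T k : ℝ) := by exact_mod_cast Nat.pos_of_ne_zero hTk
    have hs : 0 ≤ ρ * Real.log t / (T k : ℝ) :=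
      div_nonneg (mul_nonneg hρ.le hlogt) hTkpos.le
    have hsq := Real.sq_sqrt hs
    have hΔ2 : gap hK ν k ^ 2 < 4 * (ρ * Real.log t / (T k : ℝ)) := by
      nlinarith [Real.sqrt_nonneg (ρ * Real.log t / (T k : ℝ))]
    have hΔpos : 0 < gap hK ν k ^ 2 := by positivity
    have hmul : (T k : ℝ) * gap hK ν k ^ 2 < 4 * (ρ * Real.log t) := by
      have := (mul_lt_mul_iff_right₀ hTkpos).mpr hΔ2
      have heq : (T k : ℝ) * (4 * (ρ * Real.log t / (T k : ℝ))) = 4 * (ρ * Real.log t) := by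
        field_simp
      linarith
    have h3' : 4 * ρ * Real.log n / gap hK ν k ^ 2 ≤ (T k : ℝ) := h3
    have : 4 * ρ * Real.log n ≤ (T k : ℝ) * gap hK ν k ^ 2 := by
      rw [div_le_iff₀ hΔpos] at h3'; linarith
    nlinarith

end Bandit
end
end

section
/- Let (Y_u)_{u≥1} be i.i.d. random variables with values in [0,1] and mean μ, and let Ŷ_s = (1/s)Σ_{u=1}^s Y_u. Then for every ρ>0, every β∈(0,1) and every integer t≥2: P( ∃ s∈{1,…,t}: Ŷ_s + √(ρ log t/s) ≤ μ ) ≤ ( log t/log(1/β) + 1 )·t^{−2ρβ}; and likewise P( ∃ s∈{1,…,t}: Ŷ_s ≥ μ + √(ρ log t/s) ) ≤ ( log t/log(1/β) + 1 )·t^{−2ρβ}. -/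
open MeasureTheory ProbabilityTheory Filter Asymptotics

noncomputable section

section PeelAux
open Real MeasureTheory ProbabilityTheory
open scoped ENNReal

namespace Peel

lemma logMgfBound (p : ℝ) (hp0 : 0 ≤ p) (hp1 : p ≤ 1) (x : ℝ) :
    Real.log (1 - p + p * Real.exp x) ≤ p * x + x ^ 2 / 8 := by
  set u : ℝ → ℝ := fun y => 1 - p + p * Real.exp y with hu_def
  have hu : ∀ y, 0 < u y := by
    intro y
    rcases lt_or_eq_of_le hp1 with h | h
    · have := mul_nonneg hp0 (Real.exp_pos y).le
      simp only [hu_def]; nlinarith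
    · simp [hu_def, ← h, Real.exp_pos y]
      positivity
  have hu' : ∀ y, HasDerivAt u (p * Real.exp y) y := by
    intro y
    simpa [hu_def] using ((Real.hasDerivAt_exp y).const_mul p).const_add (1 - p)
  clear_value u
  set F : ℝ → ℝ := fun y => p * y + y ^ 2 / 8 - Real.log (u y) with hF_def
  set F' : ℝ → ℝ := fun y => p + y / 4 - p * Real.exp y / u y with hF'_def
  have hF : ∀ y, HasDerivAt F (F' y) y := by
    intro y
    have hlog : HasDerivAt (fun y => Real.log (u y)) (p * Real.exp y / u y) y :=
      (hu' y).log (hu y).ne'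
    have h1 : HasDerivAt (fun y : ℝ => p * y + y ^ 2 / 8) (p + 2 * y / 8) y := by
      have := ((hasDerivAt_pow 2 y).div_const 8).const_add (p * y)
      have h2 : HasDerivAt (fun y : ℝ => p * y) p y := by
        simpa using (hasDerivAt_id y).const_mul p
      exact (h2.add ((hasDerivAt_pow 2 y).div_const 8)).congr_deriv (by norm_num)
    have := h1.sub hlog
    exact this.congr_deriv (by simp only [hF'_def]; ring)
  have hF' : ∀ y, HasDerivAt F' (1/4 - (p * Real.exp y * u y - p * Real.exp y * (p * Real.exp y)) / (u y) ^ 2) y := by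
    intro y
    have hq : HasDerivAt (fun y => p * Real.exp y / u y)
        ((p * Real.exp y * u y - p * Real.exp y * (p * Real.exp y)) / (u y) ^ 2) y :=
      ((Real.hasDerivAt_exp y).const_mul p).div (hu' y) (hu y).ne'
    have h1 : HasDerivAt (fun y : ℝ => p + y / 4) (1/4) y := by
      simpa using ((hasDerivAt_id y).div_const 4).const_add p
    exact h1.sub hq
  have hF'nonneg : ∀ y, 0 ≤ 1/4 - (p * Real.exp y * u y - p * Real.exp y * (p * Real.exp y)) / (u y) ^ 2 := by
    intro y
    have h2 : (0:ℝ) < (u y) ^ 2 := pow_pos (hu y) 2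
    rw [sub_nonneg, div_le_iff₀ h2]
    have expand : (u y - 2 * (p * Real.exp y)) ^ 2 =
        (u y) ^ 2 - 4 * (p * Real.exp y * u y) + 4 * (p * Real.exp y * (p * Real.exp y)) := by
      ring
    have := sq_nonneg (u y - 2 * (p * Real.exp y))
    rw [expand] at this
    linarith
  have hmono : Monotone F' := by
    apply monotone_of_deriv_nonneg
    · exact fun y => (hF' y).differentiableAt
    · intro y
      rw [(hF' y).deriv]
      exact hF'nonneg y
  have hF'0 : F' 0 = 0 := by
    simp [hF'_def, hu_def]
  have hF0 : F 0 = 0 := by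
    simp [hF_def, hu_def]
  have key : 0 ≤ F x := by
    rcases le_or_gt 0 x with hx | hx
    · have : MonotoneOn F (Set.Ici 0) := by
        apply monotoneOn_of_deriv_nonneg (convex_Ici 0)
        · exact (Differentiable.continuous (fun y => (hF y).differentiableAt)).continuousOn
        · intro y hy
          exact ((hF y).differentiableAt).differentiableWithinAt
        · intro y hy
          rw [(hF y).deriv]
          rw [interior_Ici] at hy
          calc (0:ℝ) = F' 0 := hF'0.symm
          _ ≤ F' y := hmono hy.le
      have := this (Set.self_mem_Ici) hx hx
      rwa [hF0] at this
    · have : AntitoneOn F (Set.Iic 0) := by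
        apply antitoneOn_of_deriv_nonpos (convex_Iic 0)
        · exact (Differentiable.continuous (fun y => (hF y).differentiableAt)).continuousOn
        · intro y hy
          exact ((hF y).differentiableAt).differentiableWithinAt
        · intro y hy
          rw [(hF y).deriv]
          rw [interior_Iic] at hy
          calc F' y ≤ F' 0 := hmono hy.le
          _ = 0 := hF'0
      have := this (Set.mem_Iic.2 hx.le) (Set.self_mem_Iic) hx.le
      rwa [hF0] at this
  simp only [hF_def, hu_def] at key
  linarith

variable {Ω : Type} [MeasurableSpace Ω] (P : Measure Ω) [IsProbabilityMeasure P]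

lemma integrable_of_bdd {f : Ω → ℝ} (hf : Measurable f) {C : ℝ} (h : ∀ ω, |f ω| ≤ C) :
    Integrable f P :=
  (integrable_const C).mono' hf.aestronglyMeasurable (Filter.Eventually.of_forall h)

lemma mgf_le_of_Icc {Z : Ω → ℝ} (hm : Measurable Z) {c : ℝ}
    (hb : ∀ ω, Z ω ∈ Set.Icc c (c + 1)) (h0 : ∫ ω, Z ω ∂P = 0) (l : ℝ) :
    ∫ ω, Real.exp (l * Z ω) ∂P ≤ Real.exp (l ^ 2 / 8) := by
  have hZint : Integrable Z P := by
    refine integrable_of_bdd P hm (C := |c| + 1) fun ω => ?_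
    have h1 := (hb ω).1; have h2 := (hb ω).2
    rw [abs_le]; constructor <;> [nlinarith [neg_abs_le c]; nlinarith [le_abs_self c]]
  have hc0 : c ≤ 0 := by
    have : ∫ (_ : Ω), c ∂P ≤ ∫ ω, Z ω ∂P :=
      integral_mono (integrable_const c) hZint fun ω => (hb ω).1
    simpa [h0] using this
  have hc1 : 0 ≤ c + 1 := by
    have : ∫ ω, Z ω ∂P ≤ ∫ (_ : Ω), (c + 1) ∂P :=
      integral_mono hZint (integrable_const (c + 1)) fun ω => (hb ω).2
    simpa [h0] using this
  set p : ℝ := -c with hp_def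
  have hp0 : 0 ≤ p := by simp [hp_def]; linarith
  have hp1 : p ≤ 1 := by simp [hp_def]; linarith
  set A : ℝ := Real.exp (l * c) * (1 + c - c * Real.exp l) with hA_def
  set B : ℝ := Real.exp (l * c) * (Real.exp l - 1) with hB_def
  have hpt : ∀ ω, Real.exp (l * Z ω) ≤ A + B * Z ω := by
    intro ω
    set y : ℝ := Z ω - c with hy_def
    have hy0 : 0 ≤ y := by simp [hy_def]; exact (hb ω).1
    have hy1 : y ≤ 1 := by simp [hy_def]; nlinarith [(hb ω).2]
    have hconv := convexOn_exp.2 (Set.mem_univ (0 : ℝ)) (Set.mem_univ l)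
      (by linarith : (0:ℝ) ≤ 1 - y) hy0 (by ring)
    simp only [smul_eq_mul, mul_zero, Real.exp_zero, mul_one] at hconv
    have hZy : Z ω = c + y := by simp [hy_def]
    rw [hZy, mul_add, Real.exp_add]
    have hexp_pos := (Real.exp_pos (l * c)).le
    calc Real.exp (l * c) * Real.exp (l * y)
        ≤ Real.exp (l * c) * ((1 - y) * 1 + y * Real.exp l) := by
          apply mul_le_mul_of_nonneg_left _ hexp_pos
          simpa [mul_comm] using hconv
      _ = A + B * (c + y) := by simp only [hA_def, hB_def]; ring
  have hint1 : Integrable (fun ω => Real.exp (l * Z ω)) P := by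
    refine integrable_of_bdd P (hm.const_mul l).exp (C := Real.exp (|l| * (|c| + 1))) fun ω => ?_
    rw [abs_of_pos (Real.exp_pos _)]
    apply Real.exp_le_exp.2
    calc l * Z ω ≤ |l * Z ω| := le_abs_self _
      _ = |l| * |Z ω| := abs_mul _ _
      _ ≤ |l| * (|c| + 1) := by
          apply mul_le_mul_of_nonneg_left _ (abs_nonneg l)
          have h1 := (hb ω).1; have h2 := (hb ω).2
          rw [abs_le]; constructor <;> [nlinarith [neg_abs_le c]; nlinarith [le_abs_self c]]
  have hint2 : Integrable (fun ω => A + B * Z ω) P :=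
    (integrable_const A).add (hZint.const_mul B)
  have hIA : ∫ ω, Real.exp (l * Z ω) ∂P ≤ A := by
    calc ∫ ω, Real.exp (l * Z ω) ∂P ≤ ∫ ω, (A + B * Z ω) ∂P :=
          integral_mono hint1 hint2 hpt
      _ = A := by
          rw [integral_add (integrable_const A) (hZint.const_mul B), integral_const,
            integral_const_mul, h0]
          simp
  refine hIA.trans ?_
  have huA : A = Real.exp (l * c + Real.log (1 - p + p * Real.exp l)) := by
    have hupos : (0:ℝ) < 1 - p + p * Real.exp l := by
      rcases lt_or_eq_of_le hp1 with h | h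
      · nlinarith [mul_nonneg hp0 (Real.exp_pos l).le]
      · rw [h]; simpa using Real.exp_pos l
    rw [Real.exp_add, Real.exp_log hupos, hA_def, hp_def]
    ring
  rw [huA]
  apply Real.exp_le_exp.2
  have := logMgfBound p hp0 hp1 l
  have hlc : l * c = -(p * l) := by rw [hp_def]; ring
  linarith

lemma maximal_hoeffding (Z : ℕ → Ω → ℝ) (hm : ∀ u, Measurable (Z u))
    (hind : iIndepFun Z P)
    (c : ℕ → ℝ) (hb : ∀ u ω, Z u ω ∈ Set.Icc (c u) (c u + 1))
    (h0 : ∀ u, ∫ ω, Z u ω ∂P = 0)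
    (n : ℕ) (hn : 1 ≤ n) (ε : ℝ) (hε : 0 < ε) :
    P {ω | ∃ s ∈ Finset.Icc 1 n, ε ≤ ∑ u ∈ Finset.range s, Z u ω} ≤
      ENNReal.ofReal (Real.exp (-2 * ε ^ 2 / n)) := by
  classical
  have hnR : (0:ℝ) < n := by exact_mod_cast hn
  set l : ℝ := 4 * ε / n with hl_def
  have hl : 0 < l := by positivity
  set S : ℕ → Ω → ℝ := fun k ω => ∑ u ∈ Finset.range k, Z u ω with hS_def
  have hSm : ∀ k, Measurable (S k) := fun k => Finset.measurable_sum _ fun u _ => hm u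
  -- bounds on Z
  have hZint : ∀ u, Integrable (Z u) P := by
    intro u
    refine integrable_of_bdd P (hm u) (C := |c u| + 1) fun ω => ?_
    have h1 := (hb u ω).1; have h2 := (hb u ω).2
    rw [abs_le]
    constructor <;> [nlinarith [neg_abs_le (c u)]; nlinarith [le_abs_self (c u)]]
  have hc0 : ∀ u, c u ≤ 0 := by
    intro u
    have : ∫ (_ : Ω), c u ∂P ≤ ∫ ω, Z u ω ∂P :=
      integral_mono (integrable_const _) (hZint u) fun ω => (hb u ω).1
    simpa [h0 u] using this
  have hc1 : ∀ u, 0 ≤ c u + 1 := by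
    intro u
    have : ∫ ω, Z u ω ∂P ≤ ∫ (_ : Ω), (c u + 1) ∂P :=
      integral_mono (hZint u) (integrable_const _) fun ω => (hb u ω).2
    simpa [h0 u] using this
  have hZ1 : ∀ u ω, |Z u ω| ≤ 1 := by
    intro u ω
    have h1 := (hb u ω).1; have h2 := (hb u ω).2
    rw [abs_le]; constructor <;> nlinarith [hc0 u, hc1 u]
  have hSb : ∀ k ω, |S k ω| ≤ k := by
    intro k ω
    calc |S k ω| ≤ ∑ u ∈ Finset.range k, |Z u ω| := Finset.abs_sum_le_sum_abs _ _
      _ ≤ ∑ _u ∈ Finset.range k, (1:ℝ) := Finset.sum_le_sum fun u _ => hZ1 u ω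
      _ = k := by simp
  have hexpSint : ∀ k, Integrable (fun ω => Real.exp (l * S k ω)) P := by
    intro k
    refine integrable_of_bdd P ((hSm k).const_mul l).exp (C := Real.exp (l * k)) fun ω => ?_
    rw [abs_of_pos (Real.exp_pos _)]
    exact Real.exp_le_exp.2 (mul_le_mul_of_nonneg_left ((le_abs_self _).trans (hSb k ω)) hl.le)
  -- events
  set A : ℕ → Set Ω := fun k => {ω | ε ≤ S k ω ∧ ∀ j < k, S j ω < ε} with hA_def
  have hAmeas : ∀ k, MeasurableSet (A k) := by
    intro k
    have h1 : MeasurableSet {ω | ε ≤ S k ω} := measurableSet_le measurable_const (hSm k)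
    have h2 : MeasurableSet {ω | ∀ j < k, S j ω < ε} := by
      have heq : {ω | ∀ j < k, S j ω < ε} = ⋂ j ∈ Set.Iio k, {ω | S j ω < ε} := by
        ext ω; simp
      rw [heq]
      exact MeasurableSet.biInter (Set.to_countable _)
        fun j _ => measurableSet_lt (hSm j) measurable_const
    have : A k = {ω | ε ≤ S k ω} ∩ {ω | ∀ j < k, S j ω < ε} := rfl
    rw [this]; exact h1.inter h2
  -- inclusion into the union
  have hsub : {ω | ∃ s ∈ Finset.Icc 1 n, ε ≤ S s ω} ⊆ ⋃ k ∈ Finset.Icc 1 n, A k := by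
    rintro ω ⟨s, hs, hεs⟩
    rw [Finset.mem_Icc] at hs
    have hex : ∃ k, ε ≤ S k ω := ⟨s, hεs⟩
    set k := Nat.find hex with hk_def
    have hk1 : ε ≤ S k ω := Nat.find_spec hex
    have hkmin : ∀ j < k, S j ω < ε := fun j hj => lt_of_not_ge (Nat.find_min hex hj)
    have hk_le : k ≤ s := Nat.find_min' hex hεs
    have hk_pos : 1 ≤ k := by
      by_contra h
      push_neg at h
      interval_cases k
      · simp only [hS_def, Finset.range_zero, Finset.sum_empty] at hk1
        linarith
    exact Set.mem_iUnion₂.2 ⟨k, Finset.mem_Icc.2 ⟨hk_pos, hk_le.trans hs.2⟩, ⟨hk1, hkmin⟩⟩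
  -- per-piece bound
  have hpiece : ∀ k ∈ Finset.Icc 1 n,
      Real.exp (l * ε) * (P (A k)).toReal ≤
        ∫ ω, Set.indicator (A k) (fun ω => Real.exp (l * S n ω)) ω ∂P := by
    intro k hk
    rw [Finset.mem_Icc] at hk
    set T : Ω → ℝ := fun ω => ∑ u ∈ Finset.Ico k n, Z u ω with hT_def
    have hTm : Measurable T := Finset.measurable_sum _ fun u _ => hm u
    have hTb : ∀ ω, |T ω| ≤ n := by
      intro ω
      calc |T ω| ≤ ∑ u ∈ Finset.Ico k n, |Z u ω| := Finset.abs_sum_le_sum_abs _ _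
        _ ≤ ∑ _u ∈ Finset.Ico k n, (1:ℝ) := Finset.sum_le_sum fun u _ => hZ1 u ω
        _ = ((n - k : ℕ) : ℝ) := by simp [Nat.card_Ico]
        _ ≤ n := by exact_mod_cast Nat.sub_le n k
    have hST : ∀ ω, S k ω + T ω = S n ω := by
      intro ω
      simp only [hS_def, hT_def, Finset.range_eq_Ico]
      exact Finset.sum_Ico_consecutive _ (Nat.zero_le k) hk.2
    set X1 : Ω → ℝ := Set.indicator (A k) (fun ω => Real.exp (l * S k ω)) with hX1_def
    set X2 : Ω → ℝ := fun ω => Real.exp (l * T ω) with hX2_def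
    -- independence of X1 and X2
    have hdisj : Disjoint (Finset.range k) (Finset.Ico k n) := by
      rw [Finset.disjoint_left]
      intro i hi hi'
      rw [Finset.mem_range] at hi
      rw [Finset.mem_Ico] at hi'
      omega
    have base := hind.indepFun_finset (Finset.range k) (Finset.Ico k n) hdisj hm
    set σ : ℕ → ((i : (Finset.range k : Finset ℕ)) → ℝ) → ℝ :=
      fun j v => ∑ i : (Finset.range k : Finset ℕ), if (i : ℕ) < j then v i else 0 with hσ_def
    have hσm : ∀ j, Measurable (σ j) := by
      intro j
      refine Finset.measurable_sum _ fun i _ => ?_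
      by_cases h : (i : ℕ) < j
      · simpa [h] using measurable_pi_apply (a := i)
      · simpa [h] using measurable_const
    have hσS : ∀ j ≤ k, ∀ ω, σ j (fun i => Z i ω) = S j ω := by
      intro j hj ω
      rw [hσ_def]
      simp only
      rw [Finset.sum_coe_sort (f := fun i => if (i:ℕ) < j then Z i ω else 0)]
      rw [← Finset.sum_filter]
      congr 1
      ext i
      simp only [Finset.mem_filter, Finset.mem_range]
      omega
    set Bset : Set ((i : (Finset.range k : Finset ℕ)) → ℝ) :=
      {v | ε ≤ σ k v ∧ ∀ j < k, σ j v < ε} with hB_def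
    have hBmeas : MeasurableSet Bset := by
      have h1 : MeasurableSet {v | ε ≤ σ k v} := measurableSet_le measurable_const (hσm k)
      have h2 : MeasurableSet {v | ∀ j < k, σ j v < ε} := by
        have heq : {v | ∀ j < k, σ j v < ε} = ⋂ j ∈ Set.Iio k, {v | σ j v < ε} := by
          ext v; simp
        rw [heq]
        exact MeasurableSet.biInter (Set.to_countable _)
          fun j _ => measurableSet_lt (hσm j) measurable_const
      exact h1.inter h2
    set φ1 : ((i : (Finset.range k : Finset ℕ)) → ℝ) → ℝ :=
      Set.indicator Bset (fun v => Real.exp (l * σ k v)) with hφ1_def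
    have hφ1m : Measurable φ1 :=
      (((hσm k).const_mul l).exp).indicator hBmeas
    set φ2 : ((i : (Finset.Ico k n : Finset ℕ)) → ℝ) → ℝ :=
      fun v => Real.exp (l * ∑ i : (Finset.Ico k n : Finset ℕ), v i) with hφ2_def
    have hφ2m : Measurable φ2 := by
      apply Measurable.exp
      apply Measurable.const_mul
      exact Finset.measurable_sum Finset.univ (fun i _ => measurable_pi_apply i)
    have hmemB : ∀ ω, ((fun i : (Finset.range k : Finset ℕ) => Z (i : ℕ) ω) ∈ Bset) ↔ ω ∈ A k := by
      intro ω
      constructor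
      · rintro ⟨hv1, hv2⟩
        rw [hσS k le_rfl ω] at hv1
        refine ⟨hv1, fun j hj => ?_⟩
        have := hv2 j hj
        rwa [hσS j hj.le ω] at this
      · rintro ⟨h1, h2⟩
        refine ⟨by rwa [hσS k le_rfl ω], fun j hj => by rw [hσS j hj.le ω]; exact h2 j hj⟩
    have hX1eq : X1 = φ1 ∘ (fun a (i : (Finset.range k : Finset ℕ)) => Z i a) := by
      funext ω
      simp only [hX1_def, hφ1_def, Function.comp_apply, Set.indicator_apply]
      by_cases hω : ω ∈ A k
      · rw [if_pos hω, if_pos ((hmemB ω).2 hω), hσS k le_rfl ω]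
      · rw [if_neg hω, if_neg (fun h => hω ((hmemB ω).1 h))]
    have hX2eq : X2 = φ2 ∘ (fun a (i : (Finset.Ico k n : Finset ℕ)) => Z i a) := by
      funext ω
      simp only [hX2_def, hφ2_def, Function.comp_apply, hT_def]
      rw [Finset.sum_coe_sort (f := fun i => Z i ω)]
    have hIndepX : IndepFun X1 X2 P := by
      rw [hX1eq, hX2eq]
      exact base.comp hφ1m hφ2m
    -- integrability
    have hX1int : Integrable X1 P := (hexpSint k).indicator (hAmeas k)
    have hX2int : Integrable X2 P := by
      refine integrable_of_bdd P (hTm.const_mul l).exp (C := Real.exp (l * n)) fun ω => ?_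
      rw [abs_of_pos (Real.exp_pos _)]
      exact Real.exp_le_exp.2 (mul_le_mul_of_nonneg_left ((le_abs_self _).trans (hTb ω)) hl.le)
    have hTint : Integrable T P := integrable_of_bdd P hTm (C := n) hTb
    -- E[X2] ≥ 1
    have hEX2 : 1 ≤ ∫ ω, X2 ω ∂P := by
      have hTmean : ∫ ω, T ω ∂P = 0 := by
        rw [hT_def, integral_finset_sum _ fun u _ => hZint u]
        simp [h0]
      have hpt : ∀ ω, 1 + l * T ω ≤ X2 ω := by
        intro ω
        rw [hX2_def]
        have := Real.add_one_le_exp (l * T ω)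
        linarith
      calc (1:ℝ) = ∫ ω, (1 + l * T ω) ∂P := by
            rw [integral_add (integrable_const 1) (hTint.const_mul l), integral_const,
              integral_const_mul, hTmean]
            simp
        _ ≤ ∫ ω, X2 ω ∂P := integral_mono ((integrable_const 1).add (hTint.const_mul l)) hX2int hpt
    -- product identity
    have hX1X2 : ∀ ω, X1 ω * X2 ω = Set.indicator (A k) (fun ω => Real.exp (l * S n ω)) ω := by
      intro ω
      simp only [hX1_def, hX2_def, Set.indicator_apply]
      by_cases hω : ω ∈ A k
      · rw [if_pos hω, if_pos hω, ← Real.exp_add, ← mul_add, hST ω]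
      · rw [if_neg hω, if_neg hω, zero_mul]
    have hX1nonneg : 0 ≤ ∫ ω, X1 ω ∂P := by
      apply integral_nonneg
      intro ω
      exact Set.indicator_nonneg (fun ω _ => (Real.exp_pos _).le) ω
    calc Real.exp (l * ε) * (P (A k)).toReal
        ≤ ∫ ω, X1 ω ∂P := by
          rw [hX1_def, integral_indicator (hAmeas k)]
          have : Real.exp (l * ε) * (P (A k)).toReal
              = ∫ _ω in A k, Real.exp (l * ε) ∂P := by
            rw [setIntegral_const, smul_eq_mul]; exact mul_comm _ _
          rw [this]
          apply setIntegral_mono_on (integrableOn_const (measure_ne_top _ _))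
            ((hexpSint k).integrableOn) (hAmeas k)
          intro ω hω
          exact Real.exp_le_exp.2 (mul_le_mul_of_nonneg_left hω.1 hl.le)
      _ ≤ (∫ ω, X1 ω ∂P) * ∫ ω, X2 ω ∂P := le_mul_of_one_le_right hX1nonneg hEX2
      _ = ∫ ω, X1 ω * X2 ω ∂P := (hIndepX.integral_mul_eq_mul_integral hX1int.aestronglyMeasurable hX2int.aestronglyMeasurable).symm
      _ = ∫ ω, Set.indicator (A k) (fun ω => Real.exp (l * S n ω)) ω ∂P := by
          congr 1; funext ω; exact hX1X2 ω
  -- sum of indicators bound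
  have hsum_ind : ∑ k ∈ Finset.Icc 1 n,
      ∫ ω, Set.indicator (A k) (fun ω => Real.exp (l * S n ω)) ω ∂P ≤
      ∫ ω, Real.exp (l * S n ω) ∂P := by
    rw [← integral_finset_sum _ fun k _ => (hexpSint n).indicator (hAmeas k)]
    apply integral_mono
      (integrable_finset_sum _ fun k _ => (hexpSint n).indicator (hAmeas k)) (hexpSint n)
    intro ω
    simp only [Set.indicator_apply]
    set f := Real.exp (l * S n ω) with hf_def
    have hf0 : 0 ≤ f := (Real.exp_pos _).le
    have : ∑ k ∈ Finset.Icc 1 n, (if ω ∈ A k then f else 0)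
        = ∑ k ∈ (Finset.Icc 1 n).filter (fun k => ω ∈ A k), f := by
      rw [Finset.sum_filter]
    rw [this]
    rw [Finset.sum_const]
    have hcard : ((Finset.Icc 1 n).filter (fun k => ω ∈ A k)).card ≤ 1 := by
      apply Finset.card_le_one.2
      intro a ha b hb
      rw [Finset.mem_filter] at ha hb
      by_contra hne
      rcases Nat.lt_or_ge a b with h | h
      · exact absurd ha.2.1 (not_le.2 (hb.2.2 a h))
      · have hba : b < a := by omega
        exact absurd hb.2.1 (not_le.2 (ha.2.2 b hba))
    calc ((Finset.Icc 1 n).filter (fun k => ω ∈ A k)).card • f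
        ≤ 1 • f := by
          apply smul_le_smul_of_nonneg_right _ hf0
          exact_mod_cast hcard
      _ = f := one_smul _ _
  -- mgf bound
  have hmgf : ∫ ω, Real.exp (l * S n ω) ∂P ≤ Real.exp (n * (l ^ 2 / 8)) := by
    have hfun : (fun ω => Real.exp (l * S n ω))
        = fun ω => Real.exp (l * (∑ u ∈ Finset.range n, Z u) ω) := by
      funext ω
      simp [hS_def, Finset.sum_apply]
    rw [hfun]
    have : ∫ ω, Real.exp (l * (∑ u ∈ Finset.range n, Z u) ω) ∂P
        = mgf (∑ u ∈ Finset.range n, Z u) P l := rfl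
    rw [this, hind.mgf_sum hm (Finset.range n)]
    calc ∏ u ∈ Finset.range n, mgf (Z u) P l
        ≤ ∏ _u ∈ Finset.range n, Real.exp (l ^ 2 / 8) := by
          apply Finset.prod_le_prod (fun u _ => mgf_nonneg)
          intro u _
          exact mgf_le_of_Icc P (hm u) (hb u) (h0 u) l
      _ = Real.exp (n * (l ^ 2 / 8)) := by
          rw [Finset.prod_const, Finset.card_range, ← Real.exp_nat_mul]
  -- combine
  have hsum : ∑ k ∈ Finset.Icc 1 n, (P (A k)).toReal ≤ Real.exp (-2 * ε ^ 2 / n) := by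
    have h1 : Real.exp (l * ε) * ∑ k ∈ Finset.Icc 1 n, (P (A k)).toReal ≤
        Real.exp (n * (l ^ 2 / 8)) := by
      rw [Finset.mul_sum]
      calc ∑ k ∈ Finset.Icc 1 n, Real.exp (l * ε) * (P (A k)).toReal
          ≤ ∑ k ∈ Finset.Icc 1 n,
            ∫ ω, Set.indicator (A k) (fun ω => Real.exp (l * S n ω)) ω ∂P :=
            Finset.sum_le_sum hpiece
        _ ≤ ∫ ω, Real.exp (l * S n ω) ∂P := hsum_ind
        _ ≤ Real.exp (n * (l ^ 2 / 8)) := hmgf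
    have h2 : ∑ k ∈ Finset.Icc 1 n, (P (A k)).toReal ≤
        Real.exp (n * (l ^ 2 / 8)) * Real.exp (-(l * ε)) := by
      have h3 := mul_le_mul_of_nonneg_right h1 (Real.exp_pos (-(l * ε))).le
      have h4 : Real.exp (l * ε) * Real.exp (-(l * ε)) = 1 := by
        rw [← Real.exp_add]; simp
      calc ∑ k ∈ Finset.Icc 1 n, (P (A k)).toReal
          = Real.exp (l * ε) * (∑ k ∈ Finset.Icc 1 n, (P (A k)).toReal) *
            Real.exp (-(l * ε)) := by
            rw [mul_comm (Real.exp (l * ε)), mul_assoc, h4, mul_one]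
        _ ≤ _ := h3
    refine h2.trans ?_
    rw [← Real.exp_add]
    apply Real.exp_le_exp.2
    have : (n:ℝ) * (l ^ 2 / 8) + -(l * ε) = -2 * ε ^ 2 / n := by
      rw [hl_def]
      field_simp
      ring
    linarith [this.le]
  calc P {ω | ∃ s ∈ Finset.Icc 1 n, ε ≤ ∑ u ∈ Finset.range s, Z u ω}
      ≤ P (⋃ k ∈ Finset.Icc 1 n, A k) := measure_mono hsub
    _ ≤ ∑ k ∈ Finset.Icc 1 n, P (A k) := measure_biUnion_finset_le _ _
    _ = ∑ k ∈ Finset.Icc 1 n, ENNReal.ofReal (P (A k)).toReal := by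
        congr 1
        funext k
        rw [ENNReal.ofReal_toReal (measure_ne_top _ _)]
    _ = ENNReal.ofReal (∑ k ∈ Finset.Icc 1 n, (P (A k)).toReal) :=
        (ENNReal.ofReal_sum_of_nonneg fun k _ => ENNReal.toReal_nonneg).symm
    _ ≤ ENNReal.ofReal (Real.exp (-2 * ε ^ 2 / n)) := ENNReal.ofReal_le_ofReal hsum

lemma peeling_bound (Z : ℕ → Ω → ℝ) (hm : ∀ u, Measurable (Z u))
    (hind : iIndepFun Z P)
    (c : ℕ → ℝ) (hb : ∀ u ω, Z u ω ∈ Set.Icc (c u) (c u + 1))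
    (h0 : ∀ u, ∫ ω, Z u ω ∂P = 0)
    (ρ β : ℝ) (hρ : 0 < ρ) (hβ1 : 0 < β) (hβ2 : β < 1) (t : ℕ) (ht : 2 ≤ t) :
    P {ω | ∃ s ∈ Finset.Icc 1 t,
        Real.sqrt (s * (ρ * Real.log t)) ≤ ∑ u ∈ Finset.range s, Z u ω} ≤
      ENNReal.ofReal ((Real.log t / Real.log (1 / β) + 1) * (t : ℝ) ^ (-(2 * ρ * β))) := by
  classical
  have htR : (2:ℝ) ≤ (t:ℝ) := by exact_mod_cast ht
  have htpos : (0:ℝ) < t := by linarith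
  have hlogt : 0 < Real.log t := Real.log_pos (by linarith)
  set L : ℝ := Real.log (1 / β) with hL_def
  have hL : 0 < L := Real.log_pos ((one_lt_div hβ1).2 hβ2)
  set x : ℝ := Real.log t / L with hx_def
  have hx0 : 0 ≤ x := by positivity
  set J : ℕ := ⌊x⌋₊ with hJ_def
  have hpow : ∀ j : ℕ, (β : ℝ) ^ j = Real.exp (-(j * L)) := by
    intro j
    have hβL : Real.log β = -L := by
      rw [hL_def, one_div, Real.log_inv]; ring
    rw [← Real.exp_log hβ1, ← Real.exp_nat_mul, hβL]
    ring_nf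
  set nj : ℕ → ℕ := fun j => ⌊β ^ j * t⌋₊ with hnj_def
  set εj : ℕ → ℝ := fun j => Real.sqrt (β ^ (j+1) * t * (ρ * Real.log t)) with hεj_def
  have hβjt : ∀ j ≤ J, (1:ℝ) ≤ β ^ j * t := by
    intro j hj
    have h1 : (j:ℝ) ≤ x := le_trans (by exact_mod_cast hj) (Nat.floor_le hx0)
    have h2 : (j:ℝ) * L ≤ Real.log t := by
      rw [hx_def] at h1
      calc (j:ℝ) * L ≤ Real.log t / L * L := mul_le_mul_of_nonneg_right h1 hL.le
        _ = Real.log t := by field_simp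
    have h3 : Real.exp (j * L) ≤ t :=
      (Real.exp_le_exp.2 h2).trans_eq (Real.exp_log htpos)
    calc (1:ℝ) = Real.exp (-(j * L)) * Real.exp (j * L) := by
          rw [← Real.exp_add]; simp
      _ ≤ Real.exp (-(j * L)) * t := mul_le_mul_of_nonneg_left h3 (Real.exp_pos _).le
      _ = β ^ j * t := by rw [hpow j]
  have hnj1 : ∀ j ≤ J, 1 ≤ nj j := by
    intro j hj
    exact Nat.le_floor (by exact_mod_cast hβjt j hj)
  have hεjpos : ∀ j, 0 < εj j := by
    intro j
    apply Real.sqrt_pos.2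
    positivity
  set E : ℕ → Set Ω := fun j =>
    {ω | ∃ s ∈ Finset.Icc 1 (nj j), εj j ≤ ∑ u ∈ Finset.range s, Z u ω} with hE_def
  have hsub : {ω | ∃ s ∈ Finset.Icc 1 t,
      Real.sqrt (s * (ρ * Real.log t)) ≤ ∑ u ∈ Finset.range s, Z u ω} ⊆
      ⋃ j ∈ Finset.range (J + 1), E j := by
    rintro ω ⟨s, hs, hsle⟩
    rw [Finset.mem_Icc] at hs
    have hs1R : (1:ℝ) ≤ s := by exact_mod_cast hs.1
    have hsR : (0:ℝ) < s := by linarith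
    have hts1 : (1:ℝ) ≤ (t:ℝ) / s := by
      rw [le_div_iff₀ hsR, one_mul]; exact_mod_cast hs.2
    have htspos : (0:ℝ) < (t:ℝ) / s := by linarith
    set y : ℝ := Real.log ((t:ℝ) / s) / L with hy_def
    have hy0 : 0 ≤ y := div_nonneg (Real.log_nonneg hts1) hL.le
    set j : ℕ := ⌊y⌋₊ with hj_def
    have hlog2 : Real.log ((t:ℝ) / s) ≤ Real.log t :=
      Real.log_le_log htspos (div_le_self htpos.le hs1R)
    have hjJ : j ≤ J := by
      apply Nat.floor_le_floor
      rw [hy_def, hx_def]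
      gcongr
    -- s ≤ nj j
    have hsle2 : (s:ℝ) ≤ β ^ j * t := by
      have h1 : (j:ℝ) * L ≤ Real.log ((t:ℝ)/s) := by
        have := Nat.floor_le hy0
        rw [← hj_def, hy_def] at this
        calc (j:ℝ) * L ≤ Real.log ((t:ℝ)/s) / L * L := mul_le_mul_of_nonneg_right this hL.le
          _ = Real.log ((t:ℝ)/s) := by field_simp
      have h2 : Real.exp (j * L) ≤ (t:ℝ)/s :=
        (Real.exp_le_exp.2 h1).trans_eq (Real.exp_log htspos)
      have h3 : Real.exp (j * L) * s ≤ t := (le_div_iff₀ hsR).1 h2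
      calc (s:ℝ) = Real.exp (-(j * L)) * (Real.exp (j * L) * s) := by
            rw [← mul_assoc, ← Real.exp_add]; simp
        _ ≤ Real.exp (-(j * L)) * t := mul_le_mul_of_nonneg_left h3 (Real.exp_pos _).le
        _ = β ^ j * t := by rw [hpow j]
    have hsnj : s ≤ nj j := Nat.le_floor hsle2
    -- β^(j+1) t ≤ s
    have hβs : β ^ (j+1) * t ≤ s := by
      have h1 : Real.log ((t:ℝ)/s) < ((j:ℝ) + 1) * L := by
        have hy1 : y < (j:ℝ) + 1 := by
          rw [hj_def]; exact_mod_cast Nat.lt_floor_add_one y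
        have : y * L < ((j:ℝ) + 1) * L := (mul_lt_mul_of_pos_right hy1 hL)
        calc Real.log ((t:ℝ)/s) = y * L := by rw [hy_def]; field_simp
          _ < ((j:ℝ) + 1) * L := this
      have h2 : (t:ℝ)/s < Real.exp (((j:ℝ)+1) * L) := by
        calc (t:ℝ)/s = Real.exp (Real.log ((t:ℝ)/s)) := (Real.exp_log htspos).symm
          _ < Real.exp (((j:ℝ)+1) * L) := Real.exp_lt_exp.2 h1
      have h3 : (t:ℝ) < Real.exp (((j:ℝ)+1) * L) * s := (div_lt_iff₀ hsR).1 h2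
      have h4 : Real.exp (-(((j:ℝ)+1) * L)) * t < s := by
        calc Real.exp (-(((j:ℝ)+1) * L)) * t
            < Real.exp (-(((j:ℝ)+1) * L)) * (Real.exp (((j:ℝ)+1) * L) * s) :=
              mul_lt_mul_of_pos_left h3 (Real.exp_pos _)
          _ = s := by rw [← mul_assoc, ← Real.exp_add]; simp
      have h5 : β ^ (j+1) * (t:ℝ) = Real.exp (-(((j:ℝ)+1) * L)) * t := by
        rw [hpow (j+1)]
        norm_num
      linarith [h5 ▸ h4]
    have hεs : εj j ≤ Real.sqrt (s * (ρ * Real.log t)) := by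
      apply Real.sqrt_le_sqrt
      apply mul_le_mul_of_nonneg_right hβs
      positivity
    exact Set.mem_iUnion₂.2 ⟨j, Finset.mem_range.2 (by omega),
      ⟨s, Finset.mem_Icc.2 ⟨hs.1, hsnj⟩, hεs.trans hsle⟩⟩
  -- per piece bound
  have hpiece : ∀ j ∈ Finset.range (J + 1),
      P (E j) ≤ ENNReal.ofReal ((t:ℝ) ^ (-(2 * ρ * β))) := by
    intro j hj
    rw [Finset.mem_range] at hj
    have hjJ : j ≤ J := by omega
    have h1 := maximal_hoeffding P Z hm hind c hb h0 (nj j) (hnj1 j hjJ) (εj j) (hεjpos j)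
    refine h1.trans (ENNReal.ofReal_le_ofReal ?_)
    have hsq : (εj j) ^ 2 = β ^ (j+1) * t * (ρ * Real.log t) :=
      Real.sq_sqrt (by positivity)
    have hnjpos : (0:ℝ) < nj j := by exact_mod_cast hnj1 j hjJ
    have hnjle : ((nj j : ℕ) : ℝ) ≤ β ^ j * t := Nat.floor_le (by positivity)
    have hβjpos : (0:ℝ) < β ^ j * t := by positivity
    rw [Real.rpow_def_of_pos htpos]
    apply Real.exp_le_exp.2
    have step1 : -2 * (εj j) ^ 2 / (nj j : ℝ) ≤ -2 * (εj j) ^ 2 / (β ^ j * t) := by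
      rw [neg_mul, neg_div, neg_div, neg_le_neg_iff]
      apply div_le_div_of_nonneg_left (by positivity) hnjpos hnjle
    have step2 : -2 * (εj j) ^ 2 / (β ^ j * t) = Real.log t * (-(2 * ρ * β)) := by
      rw [hsq, pow_succ]
      field_simp
    linarith [step2 ▸ step1]
  -- assemble
  calc P {ω | ∃ s ∈ Finset.Icc 1 t,
        Real.sqrt (s * (ρ * Real.log t)) ≤ ∑ u ∈ Finset.range s, Z u ω}
      ≤ P (⋃ j ∈ Finset.range (J + 1), E j) := measure_mono hsub
    _ ≤ ∑ j ∈ Finset.range (J + 1), P (E j) := measure_biUnion_finset_le _ _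
    _ ≤ ∑ j ∈ Finset.range (J + 1), ENNReal.ofReal ((t:ℝ) ^ (-(2 * ρ * β))) :=
        Finset.sum_le_sum hpiece
    _ = ((J:ℝ≥0∞) + 1) * ENNReal.ofReal ((t:ℝ) ^ (-(2 * ρ * β))) := by
        rw [Finset.sum_const, Finset.card_range, nsmul_eq_mul]
        norm_num
    _ ≤ ENNReal.ofReal (x + 1) * ENNReal.ofReal ((t:ℝ) ^ (-(2 * ρ * β))) := by
        apply mul_le_mul_left
        have h1 : ((J:ℝ) + 1) ≤ x + 1 := by
          have := Nat.floor_le hx0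
          rw [← hJ_def] at this
          linarith
        calc ((J:ℝ≥0∞) + 1) = ENNReal.ofReal ((J:ℝ) + 1) := by
              rw [ENNReal.ofReal_add (by positivity) (by norm_num)]
              simp [ENNReal.ofReal_natCast]
          _ ≤ ENNReal.ofReal (x + 1) := ENNReal.ofReal_le_ofReal h1
    _ = ENNReal.ofReal ((x + 1) * (t:ℝ) ^ (-(2 * ρ * β))) :=
        (ENNReal.ofReal_mul (by positivity)).symm

end Peel
end PeelAux

namespace Bandit

/-- Let (Y_u) be i.i.d. [0,1]-valued random variables with mean μ, and
Ŷ_s their empirical means. For every ρ > 0, β ∈ (0,1) and integer t ≥ 2, the peeling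
argument together with Hoeffding–Azuma's maximal inequality gives
P(∃ s ∈ {1,…,t} : Ŷ_s + √(ρ log t/s) ≤ μ) ≤ (log t/log(1/β) + 1)·t^{-2ρβ}, and likewise
P(∃ s ∈ {1,…,t} : Ŷ_s ≥ μ + √(ρ log t/s)) ≤ (log t/log(1/β) + 1)·t^{-2ρβ}. -/
theorem peeling_maximal_bound
    (Ω : Type) (_ : MeasurableSpace Ω) (P : Measure Ω) (hP : IsProbabilityMeasure P)
    (Y : ℕ → Ω → ℝ) (hYm : ∀ u, Measurable (Y u))
    (hY01 : ∀ u ω, Y u ω ∈ Set.Icc (0 : ℝ) 1)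
    (hindep : iIndepFun Y P)
    (hident : ∀ u, Measure.map (Y u) P = Measure.map (Y 0) P)
    (μ : ℝ) (hμ : μ = ∫ ω, Y 0 ω ∂P)
    (ρ β : ℝ) (hρ : 0 < ρ) (hβ1 : 0 < β) (hβ2 : β < 1)
    (t : ℕ) (ht : 2 ≤ t) :
    P {ω | ∃ s ∈ Finset.Icc 1 t,
        empMean (fun u => Y u ω) s + Real.sqrt (ρ * Real.log t / s) ≤ μ} ≤
      ENNReal.ofReal
        ((Real.log t / Real.log (1 / β) + 1) * (t : ℝ) ^ (-(2 * ρ * β))) ∧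
    P {ω | ∃ s ∈ Finset.Icc 1 t,
        μ + Real.sqrt (ρ * Real.log t / s) ≤ empMean (fun u => Y u ω) s} ≤
      ENNReal.ofReal
        ((Real.log t / Real.log (1 / β) + 1) * (t : ℝ) ^ (-(2 * ρ * β))) := by
  haveI := hP
  have htR : (2:ℝ) ≤ (t:ℝ) := by exact_mod_cast ht
  have hlogt : 0 < Real.log t := Real.log_pos (by linarith)
  have hYint : ∀ u, Integrable (Y u) P := by
    intro u
    refine Peel.integrable_of_bdd P (hYm u) (C := 1) fun ω => ?_
    have h1 := (hY01 u ω).1; have h2 := (hY01 u ω).2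
    rw [abs_le]; constructor <;> linarith
  have hEY : ∀ u, ∫ ω, Y u ω ∂P = μ := by
    intro u
    have h1 : ∫ ω, Y u ω ∂P = ∫ y, y ∂(Measure.map (Y u) P) :=
      (integral_map (hYm u).aemeasurable aestronglyMeasurable_id).symm
    have h2 : ∫ ω, Y 0 ω ∂P = ∫ y, y ∂(Measure.map (Y 0) P) :=
      (integral_map (hYm 0).aemeasurable aestronglyMeasurable_id).symm
    rw [h1, hident u, ← h2, hμ]
  constructor
  · -- lower deviation
    set Z : ℕ → Ω → ℝ := fun u => (fun y => μ - y) ∘ Y u with hZ_def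
    have hZm : ∀ u, Measurable (Z u) :=
      fun u => (measurable_const.sub measurable_id).comp (hYm u)
    have hZind : iIndepFun Z P :=
      hindep.comp (fun _ => fun y => μ - y) (fun _ => measurable_const.sub measurable_id)
    have hZb : ∀ u ω, Z u ω ∈ Set.Icc (μ - 1) ((μ - 1) + 1) := by
      intro u ω
      have h1 := (hY01 u ω).1; have h2 := (hY01 u ω).2
      constructor
      · show μ - 1 ≤ μ - Y u ω; linarith
      · show μ - Y u ω ≤ (μ - 1) + 1; linarith
    have hZ0 : ∀ u, ∫ ω, Z u ω ∂P = 0 := by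
      intro u
      have he : (fun ω => Z u ω) = fun ω => μ - Y u ω := rfl
      rw [he, integral_sub (integrable_const μ) (hYint u), integral_const, hEY u]
      simp
    have hset : {ω | ∃ s ∈ Finset.Icc 1 t,
        empMean (fun u => Y u ω) s + Real.sqrt (ρ * Real.log t / s) ≤ μ}
        = {ω | ∃ s ∈ Finset.Icc 1 t,
            Real.sqrt (s * (ρ * Real.log t)) ≤ ∑ u ∈ Finset.range s, Z u ω} := by
      ext ω
      simp only [Set.mem_setOf_eq]
      refine exists_congr fun s => and_congr_right fun hs => ?_
      have hs1R : (1:ℝ) ≤ s := by exact_mod_cast (Finset.mem_Icc.1 hs).1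
      have hspos : (0:ℝ) < s := by linarith
      set m := ∑ u ∈ Finset.range s, Y u ω with hm_def
      set q := Real.sqrt (ρ * Real.log t / s) with hq_def
      have hsum : ∑ u ∈ Finset.range s, Z u ω = s * μ - m := by
        have he : ∑ u ∈ Finset.range s, Z u ω = ∑ u ∈ Finset.range s, (μ - Y u ω) := rfl
        rw [he, Finset.sum_sub_distrib, Finset.sum_const, Finset.card_range, nsmul_eq_mul]
      have hsqrt : Real.sqrt (s * (ρ * Real.log t)) = s * q := by
        rw [hq_def, show (s:ℝ) * (ρ * Real.log t) = s^2 * (ρ * Real.log t / s) from by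
          field_simp, Real.sqrt_mul (sq_nonneg _), Real.sqrt_sq hspos.le]
      have hemp : empMean (fun u => Y u ω) s = m / s := rfl
      rw [hemp, hsum, hsqrt]
      constructor
      · intro h
        have h2 := mul_le_mul_of_nonneg_right h hspos.le
        have e : (m / s + q) * s = m + q * s := by field_simp
        rw [e] at h2
        linarith
      · intro h
        have e : m / s + q = (m + q * s) / s := by field_simp
        rw [e]
        calc (m + q * s) / s ≤ (μ * s) / s := by
              exact (div_le_div_iff_of_pos_right hspos).2 (by linarith)
          _ = μ := by field_simp
    rw [hset]
    exact Peel.peeling_bound P Z hZm hZind _ hZb hZ0 ρ β hρ hβ1 hβ2 t ht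
  · -- upper deviation
    set Z : ℕ → Ω → ℝ := fun u => (fun y => y - μ) ∘ Y u with hZ_def
    have hZm : ∀ u, Measurable (Z u) :=
      fun u => (measurable_id.sub measurable_const).comp (hYm u)
    have hZind : iIndepFun Z P :=
      hindep.comp (fun _ => fun y => y - μ) (fun _ => measurable_id.sub measurable_const)
    have hZb : ∀ u ω, Z u ω ∈ Set.Icc (-μ) ((-μ) + 1) := by
      intro u ω
      have h1 := (hY01 u ω).1; have h2 := (hY01 u ω).2
      constructor
      · show -μ ≤ Y u ω - μ; linarith
      · show Y u ω - μ ≤ (-μ) + 1; linarith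
    have hZ0 : ∀ u, ∫ ω, Z u ω ∂P = 0 := by
      intro u
      have he : (fun ω => Z u ω) = fun ω => Y u ω - μ := rfl
      rw [he, integral_sub (hYint u) (integrable_const μ), integral_const, hEY u]
      simp
    have hset : {ω | ∃ s ∈ Finset.Icc 1 t,
        μ + Real.sqrt (ρ * Real.log t / s) ≤ empMean (fun u => Y u ω) s}
        = {ω | ∃ s ∈ Finset.Icc 1 t,
            Real.sqrt (s * (ρ * Real.log t)) ≤ ∑ u ∈ Finset.range s, Z u ω} := by
      ext ω
      simp only [Set.mem_setOf_eq]
      refine exists_congr fun s => and_congr_right fun hs => ?_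
      have hs1R : (1:ℝ) ≤ s := by exact_mod_cast (Finset.mem_Icc.1 hs).1
      have hspos : (0:ℝ) < s := by linarith
      set m := ∑ u ∈ Finset.range s, Y u ω with hm_def
      set q := Real.sqrt (ρ * Real.log t / s) with hq_def
      have hsum : ∑ u ∈ Finset.range s, Z u ω = m - s * μ := by
        have he : ∑ u ∈ Finset.range s, Z u ω = ∑ u ∈ Finset.range s, (Y u ω - μ) := rfl
        rw [he, Finset.sum_sub_distrib, Finset.sum_const, Finset.card_range, nsmul_eq_mul]
      have hsqrt : Real.sqrt (s * (ρ * Real.log t)) = s * q := by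
        rw [hq_def, show (s:ℝ) * (ρ * Real.log t) = s^2 * (ρ * Real.log t / s) from by
          field_simp, Real.sqrt_mul (sq_nonneg _), Real.sqrt_sq hspos.le]
      have hemp : empMean (fun u => Y u ω) s = m / s := rfl
      rw [hemp, hsum, hsqrt]
      constructor
      · intro h
        have h2 := mul_le_mul_of_nonneg_right h hspos.le
        have e : m / s * s = m := div_mul_cancel₀ m hspos.ne'
        rw [add_mul] at h2
        rw [e] at h2
        linarith
      · intro h
        have e : μ + q = ((μ + q) * s) / s := by field_simp
        rw [e]
        exact (div_le_div_iff_of_pos_right hspos).2 (by linarith)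
    rw [hset]
    exact Peel.peeling_bound P Z hZm hZind _ hZb hZ0 ρ β hρ hβ1 hβ2 t ht

end Bandit
end
end
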